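/- Let p be an odd prime, g ≥ 1, m = (p−1)/2, and c_k as above. Then for 1 ≤ i ≤ g and 1 ≤ j < g: ∑_{k=1}^{2g−1} z_k(z_k − 1)∂_k c_{ip−j} = (m·∑_{k=1}^{2g−1} z_k + g − j)·c_{ip−j} + (m − g + j + 1)·c_{ip−(j+1)} in 𝔽_p[z₁,…,z_{2g−1}]. -/

import Mathlib

open MvPolynomial

/-- Product rule for a derivation over a finite product. -/
theorem Derivation.finset_prod_apply {R A M : Type*} [CommRing R] [CommRing A] [Algebra R A]
    [AddCommGroup M] [Module A M] [Module R M] (D : Derivation R A M)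
    {ι : Type*} [DecidableEq ι] (s : Finset ι) (f : ι → A) :
    D (∏ t ∈ s, f t) = ∑ t ∈ s, (∏ r ∈ s.erase t, f r) • D (f t) := by
  induction s using Finset.induction_on with
  | empty => simp
  | @insert a s ha ih =>
    rw [Finset.prod_insert ha, D.leibniz, ih, Finset.sum_insert ha,
      Finset.erase_insert ha, Finset.smul_sum]
    rw [add_comm]
    congr 1
    refine Finset.sum_congr rfl fun t ht => ?_
    rw [Finset.erase_insert_of_ne (by rintro rfl; exact ha ht),
      Finset.prod_insert (fun h => ha (Finset.mem_of_mem_erase h)), mul_smul]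

/-- Coefficient-wise application of a derivation, as a derivation on polynomials. -/
noncomputable def cwD {R A : Type*} [CommRing R] [CommRing A] [Algebra R A]
    (d : Derivation R A A) : Derivation R (Polynomial A) (Polynomial A) :=
  (PolynomialModule.equivPolynomialSelf (R := A)).toLinearMap.compDer d.mapCoeffs

theorem coeff_cwD {R A : Type*} [CommRing R] [CommRing A] [Algebra R A]
    (d : Derivation R A A) (G : Polynomial A) (N : ℕ) :
    (cwD d G).coeff N = d (G.coeff N) := rfl

theorem cwD_X {R A : Type*} [CommRing R] [CommRing A] [Algebra R A]
    (d : Derivation R A A) : cwD d (Polynomial.X : Polynomial A) = 0 := by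
  refine Polynomial.ext fun N => ?_
  rw [coeff_cwD]
  simp [Polynomial.coeff_X, apply_ite d]

theorem cwD_C {R A : Type*} [CommRing R] [CommRing A] [Algebra R A]
    (d : Derivation R A A) (a : A) : cwD d (Polynomial.C a) = Polynomial.C (d a) := by
  refine Polynomial.ext fun N => ?_
  rw [coeff_cwD]
  simp [Polynomial.coeff_C, apply_ite d]

set_option maxHeartbeats 1000000 in
/-- Combined contiguity relation for the entries of the Cartier–Manin matrix:
`∑_k z_k(z_k − 1)∂_k c_{ip−j} = (m·∑_k z_k + g − j)·c_{ip−j} + (m − g + j + 1)·c_{ip−(j+1)}`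
with `m = (p−1)/2`, the coefficients being taken in `𝔽_p`. -/
theorem contiguity_relation_combined (p : ℕ) (hp : p.Prime) (hodd : Odd p)
    (g : ℕ) (hg : 1 ≤ g) (m : ℕ) (hm : m = (p - 1) / 2)
    (c : ℕ → MvPolynomial (Fin (2 * g - 1)) (ZMod p))
    (hc : ∀ k : ℕ, c k = Polynomial.coeff
      ((Polynomial.X * (Polynomial.X - 1)
          * ∏ t : Fin (2 * g - 1), (Polynomial.X - Polynomial.C (MvPolynomial.X t))
        : Polynomial (MvPolynomial (Fin (2 * g - 1)) (ZMod p))) ^ m) k)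
    (i j : ℕ) (hi1 : 1 ≤ i) (hig : i ≤ g) (hj1 : 1 ≤ j) (hjg : j < g) :
    ∑ k : Fin (2 * g - 1),
        MvPolynomial.X k * (MvPolynomial.X k - 1) * pderiv k (c (i * p - j))
      = (MvPolynomial.C ((m : ZMod p)) * (∑ k : Fin (2 * g - 1), MvPolynomial.X k)
          + MvPolynomial.C ((g : ZMod p) - (j : ZMod p))) * c (i * p - j)
        + MvPolynomial.C ((m : ZMod p) - (g : ZMod p) + (j : ZMod p) + 1)
          * c (i * p - (j + 1)) := by
  classical
  have hp3 : 3 ≤ p := by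
    have h2 := hp.two_le
    rcases hodd with ⟨t, ht⟩
    omega
  have h2m : 2 * m = p - 1 := by
    rcases hodd with ⟨t, ht⟩; omega
  have hm1 : 1 ≤ m := by omega
  set Q : Polynomial (MvPolynomial (Fin (2 * g - 1)) (ZMod p)) :=
    ∏ t : Fin (2 * g - 1), (Polynomial.X - Polynomial.C (MvPolynomial.X t)) with hQ
  set f : Polynomial (MvPolynomial (Fin (2 * g - 1)) (ZMod p)) :=
    Polynomial.X * (Polynomial.X - 1) * Q with hf
  set F : Polynomial (MvPolynomial (Fin (2 * g - 1)) (ZMod p)) := f ^ m with hF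
  have hcF : ∀ k : ℕ, c k = F.coeff k := hc
  -- degenerate case
  by_cases hdeg : i * p ≤ j
  · have h0 : i * p - j = 0 := by omega
    have h1 : i * p - (j + 1) = 0 := by omega
    have hc0 : c 0 = 0 := by
      rw [hcF, hF, ← Polynomial.constantCoeff_apply, map_pow, Polynomial.constantCoeff_apply, hf]
      rw [Polynomial.mul_coeff_zero, Polynomial.mul_coeff_zero, Polynomial.coeff_X_zero]
      simp [zero_pow (by omega : m ≠ 0)]
    rw [h0, h1, hc0]
    simp
  push_neg at hdeg
  -- setup
  set E : Polynomial (MvPolynomial (Fin (2 * g - 1)) (ZMod p)) := f ^ (m - 1) with hE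
  have hFsplit : F = E * f := by rw [hF, hE, ← pow_succ]; congr 1; omega
  set D : Fin (2 * g - 1) → Derivation (ZMod p)
      (Polynomial (MvPolynomial (Fin (2 * g - 1)) (ZMod p)))
      (Polynomial (MvPolynomial (Fin (2 * g - 1)) (ZMod p))) :=
    fun k => cwD (pderiv k) with hD
  have hDcoeff : ∀ (k) (G : Polynomial (MvPolynomial (Fin (2 * g - 1)) (ZMod p))) (N : ℕ),
      (D k G).coeff N = pderiv k (G.coeff N) := fun k G N => coeff_cwD _ _ _
  set P : Fin (2 * g - 1) → Polynomial (MvPolynomial (Fin (2 * g - 1)) (ZMod p)) :=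
    fun k => ∏ t ∈ Finset.univ.erase k,
      ((Polynomial.X - Polynomial.C (MvPolynomial.X t))
        : Polynomial (MvPolynomial (Fin (2 * g - 1)) (ZMod p))) with hP
  have hQP : ∀ k, (Polynomial.X - Polynomial.C (MvPolynomial.X k)) * P k = Q := fun k => by
    simp only [hP, hQ]
    rw [Finset.mul_prod_erase Finset.univ
      (fun t => Polynomial.X - Polynomial.C (MvPolynomial.X t)) (Finset.mem_univ k)]
  -- derivative facts
  have hDQ : ∀ k, D k Q = -(P k) := by
    intro k
    rw [hQ, hD]
    rw [Derivation.finset_prod_apply]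
    have h1 : ∀ t ∈ (Finset.univ : Finset (Fin (2 * g - 1))), (∏ r ∈ Finset.univ.erase t,
          ((Polynomial.X - Polynomial.C (MvPolynomial.X r))
            : Polynomial (MvPolynomial (Fin (2 * g - 1)) (ZMod p))))
        • cwD (pderiv k) (Polynomial.X - Polynomial.C (MvPolynomial.X t))
        = if t = k then -(P k) else 0 := by
      intro t _
      rw [map_sub, cwD_X, cwD_C, pderiv_X, zero_sub, Pi.single_apply]
      by_cases h : t = k
      · subst h
        rw [if_pos rfl, if_pos rfl, hP]
        simp only [smul_eq_mul, map_one]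
        ring
      · rw [if_neg h, if_neg h]
        simp
    rw [Finset.sum_congr rfl h1, Finset.sum_ite_eq' Finset.univ k fun _ => -(P k)]
    simp
  have hDf : ∀ k, D k f = -(Polynomial.X * (Polynomial.X - 1) * P k) := by
    intro k
    rw [hf, Derivation.leibniz, Derivation.leibniz, hDQ]
    rw [show D k (Polynomial.X : Polynomial (MvPolynomial (Fin (2 * g - 1)) (ZMod p))) = 0
      from cwD_X _]
    rw [show D k ((Polynomial.X : Polynomial (MvPolynomial (Fin (2 * g - 1)) (ZMod p))) - 1)
        = 0 by rw [map_sub, Derivation.map_one_eq_zero, sub_zero, hD]; exact cwD_X (pderiv k)]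
    simp [smul_eq_mul]
    ring
  have hDF : ∀ k, D k F = -((m : Polynomial (MvPolynomial (Fin (2 * g - 1)) (ZMod p)))
      * (E * (Polynomial.X * (Polynomial.X - 1) * P k))) := by
    intro k
    rw [hF, Derivation.leibniz_pow, hDf, ← hE]
    simp [smul_eq_mul, nsmul_eq_mul]
    ring
  have hQd : Polynomial.derivative Q = ∑ k, P k := by
    rw [hQ, ← Polynomial.derivative'_apply, Derivation.finset_prod_apply]
    simp [Polynomial.derivative'_apply, smul_eq_mul, hP]
  have hFd : Polynomial.derivative F = (m : Polynomial (MvPolynomial (Fin (2 * g - 1)) (ZMod p)))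
      * (E * ((2 * Polynomial.X - 1) * Q
          + Polynomial.X * (Polynomial.X - 1) * (∑ k, P k))) := by
    rw [hF, Polynomial.derivative_pow, Polynomial.C_eq_natCast, ← hE]
    rw [hf, Polynomial.derivative_mul, Polynomial.derivative_mul, hQd]
    simp
    ring
  -- per-k algebraic identity
  have claim1 : ∀ k, Polynomial.C (MvPolynomial.X k) * (Polynomial.C (MvPolynomial.X k) - 1)
        * (Polynomial.X * (Polynomial.X - 1) * P k)
      = Polynomial.X * (Polynomial.X - 1) * (Polynomial.X * (Polynomial.X - 1) * P k)
        - (2 * Polynomial.X - 1) * (Polynomial.X * (Polynomial.X - 1) * Q)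
        + (Polynomial.X - Polynomial.C (MvPolynomial.X k))
          * (Polynomial.X * (Polynomial.X - 1) * Q) := by
    intro k
    linear_combination (Polynomial.X * (Polynomial.X - 1)
      * ((Polynomial.X - Polynomial.C (MvPolynomial.X k)) - (2 * Polynomial.X - 1))) * hQP k
  -- summed identity
  have claim2 : ∑ k, Polynomial.C (MvPolynomial.X k) * (Polynomial.C (MvPolynomial.X k) - 1)
        * (Polynomial.X * (Polynomial.X - 1) * P k)
      = Polynomial.X * (Polynomial.X - 1) * (Polynomial.X * (Polynomial.X - 1) * (∑ k, P k))
        - ((2 * g - 1 : ℕ) : Polynomial (MvPolynomial (Fin (2 * g - 1)) (ZMod p)))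
          * ((2 * Polynomial.X - 1) * (Polynomial.X * (Polynomial.X - 1) * Q))
        + (((2 * g - 1 : ℕ) : Polynomial (MvPolynomial (Fin (2 * g - 1)) (ZMod p))) * Polynomial.X
            - Polynomial.C (∑ k, MvPolynomial.X k))
          * (Polynomial.X * (Polynomial.X - 1) * Q) := by
    rw [Finset.sum_congr rfl fun k _ => claim1 k]
    simp only [Finset.sum_add_distrib, Finset.sum_sub_distrib, ← Finset.sum_mul,
      ← Finset.mul_sum, Finset.sum_const, Finset.card_univ, Fintype.card_fin,
      nsmul_eq_mul, map_sum]
    ring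
  -- the master polynomial identity
  have master : Polynomial.X * (∑ k, Polynomial.C (MvPolynomial.X k)
        * (Polynomial.C (MvPolynomial.X k) - 1) * D k F)
      = ((2 * g + 1 : ℕ) : Polynomial (MvPolynomial (Fin (2 * g - 1)) (ZMod p)))
          * (m : Polynomial (MvPolynomial (Fin (2 * g - 1)) (ZMod p)))
          * (Polynomial.X * (Polynomial.X * F))
        + (m : Polynomial (MvPolynomial (Fin (2 * g - 1)) (ZMod p)))
          * (Polynomial.C (∑ k, MvPolynomial.X k) * (Polynomial.X * F))
        - ((2 * g : ℕ) : Polynomial (MvPolynomial (Fin (2 * g - 1)) (ZMod p)))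
          * (m : Polynomial (MvPolynomial (Fin (2 * g - 1)) (ZMod p))) * (Polynomial.X * F)
        - Polynomial.X * (Polynomial.X * ((Polynomial.X - 1) * Polynomial.derivative F)) := by
    have hsum : ∀ k ∈ (Finset.univ : Finset (Fin (2 * g - 1))),
        Polynomial.C (MvPolynomial.X k) * (Polynomial.C (MvPolynomial.X k) - 1) * D k F
        = (-((m : Polynomial (MvPolynomial (Fin (2 * g - 1)) (ZMod p))) * E))
          * (Polynomial.C (MvPolynomial.X k) * (Polynomial.C (MvPolynomial.X k) - 1)
            * (Polynomial.X * (Polynomial.X - 1) * P k)) := by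
      intro k _
      rw [hDF k]; ring
    rw [Finset.sum_congr rfl hsum, ← Finset.mul_sum, claim2, hFd, hFsplit, hf]
    have hcard : ((2 * g - 1 : ℕ) : Polynomial (MvPolynomial (Fin (2 * g - 1)) (ZMod p)))
        = 2 * (g : Polynomial (MvPolynomial (Fin (2 * g - 1)) (ZMod p))) - 1 := by
      have : (2 * g - 1 : ℕ) + 1 = 2 * g := by omega
      have h2 := congrArg (Nat.cast : ℕ → Polynomial (MvPolynomial (Fin (2 * g - 1)) (ZMod p))) this
      push_cast at h2
      linear_combination h2
    rw [hcard]
    push_cast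
    ring
  -- coefficient extraction
  obtain ⟨n0, hn0⟩ : ∃ n0, i * p - j = n0 + 1 := ⟨i * p - j - 1, by omega⟩
  have hn0' : i * p - (j + 1) = n0 := by omega
  have cast2poly : ∀ (N : ℕ) (G : Polynomial (MvPolynomial (Fin (2 * g - 1)) (ZMod p))) (d : ℕ),
      ((N : Polynomial (MvPolynomial (Fin (2 * g - 1)) (ZMod p))) * G).coeff d
        = (N : MvPolynomial (Fin (2 * g - 1)) (ZMod p)) * G.coeff d := by
    intro N G d
    rw [← Polynomial.C_eq_natCast, Polynomial.coeff_C_mul]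
  have hL : (Polynomial.X * (∑ k, Polynomial.C (MvPolynomial.X k)
        * (Polynomial.C (MvPolynomial.X k) - 1) * D k F)).coeff (n0 + 1 + 1)
      = ∑ k, MvPolynomial.X k * (MvPolynomial.X k - 1) * pderiv k (F.coeff (n0 + 1)) := by
    rw [Polynomial.coeff_X_mul, Polynomial.finset_sum_coeff]
    refine Finset.sum_congr rfl fun k _ => ?_
    have hCC : (Polynomial.C (MvPolynomial.X k) * (Polynomial.C (MvPolynomial.X k) - 1)
          : Polynomial (MvPolynomial (Fin (2 * g - 1)) (ZMod p)))
        = Polynomial.C (MvPolynomial.X k * (MvPolynomial.X k - 1)) := by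
      rw [map_mul, map_sub, map_one]
    rw [hCC, Polynomial.coeff_C_mul, hDcoeff]
  have hXFd : (Polynomial.X * Polynomial.derivative F).coeff n0
      = ((n0 : ℕ) : MvPolynomial (Fin (2 * g - 1)) (ZMod p)) * F.coeff n0 := by
    cases n0 with
    | zero => simp [Polynomial.mul_coeff_zero]
    | succ n1 =>
      rw [Polynomial.coeff_X_mul, Polynomial.coeff_derivative]
      push_cast
      ring
  have hR : (((2 * g + 1 : ℕ) : Polynomial (MvPolynomial (Fin (2 * g - 1)) (ZMod p)))
          * (m : Polynomial (MvPolynomial (Fin (2 * g - 1)) (ZMod p)))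
          * (Polynomial.X * (Polynomial.X * F))
        + (m : Polynomial (MvPolynomial (Fin (2 * g - 1)) (ZMod p)))
          * (Polynomial.C (∑ k, MvPolynomial.X k) * (Polynomial.X * F))
        - ((2 * g : ℕ) : Polynomial (MvPolynomial (Fin (2 * g - 1)) (ZMod p)))
          * (m : Polynomial (MvPolynomial (Fin (2 * g - 1)) (ZMod p))) * (Polynomial.X * F)
        - Polynomial.X * (Polynomial.X * ((Polynomial.X - 1) * Polynomial.derivative F))).coeff
          (n0 + 1 + 1)
      = (((2 * g + 1) * m : ℕ) : MvPolynomial (Fin (2 * g - 1)) (ZMod p)) * F.coeff n0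
        + (m : MvPolynomial (Fin (2 * g - 1)) (ZMod p))
          * ((∑ k, MvPolynomial.X k) * F.coeff (n0 + 1))
        - ((2 * g * m : ℕ) : MvPolynomial (Fin (2 * g - 1)) (ZMod p)) * F.coeff (n0 + 1)
        - (((n0 : ℕ) : MvPolynomial (Fin (2 * g - 1)) (ZMod p)) * F.coeff n0
            - F.coeff (n0 + 1) * (((n0 : ℕ) : MvPolynomial (Fin (2 * g - 1)) (ZMod p)) + 1)) := by
    rw [Polynomial.coeff_sub, Polynomial.coeff_sub, Polynomial.coeff_add]
    rw [← Nat.cast_mul (2 * g + 1) m, ← Nat.cast_mul (2 * g) m]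
    rw [cast2poly, cast2poly, cast2poly]
    rw [Polynomial.coeff_C_mul, Polynomial.coeff_X_mul, Polynomial.coeff_X_mul,
      Polynomial.coeff_X_mul, Polynomial.coeff_X_mul, Polynomial.coeff_X_mul]
    rw [sub_mul, one_mul, Polynomial.coeff_sub, hXFd, Polynomial.coeff_derivative]
  have hmaster := congrArg
    (fun q : Polynomial (MvPolynomial (Fin (2 * g - 1)) (ZMod p)) => q.coeff (n0 + 1 + 1)) master
  have key := hL.symm.trans (hmaster.trans hR)
  -- cast facts in the coefficient ring
  have hpR : ((p : ℕ) : MvPolynomial (Fin (2 * g - 1)) (ZMod p)) = 0 := by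
    rw [← map_natCast (MvPolynomial.C : ZMod p →+* MvPolynomial (Fin (2 * g - 1)) (ZMod p)) p,
      ZMod.natCast_self, map_zero]
  have Hn0 : ((n0 : ℕ) : MvPolynomial (Fin (2 * g - 1)) (ZMod p))
      = -((j : ℕ) : MvPolynomial (Fin (2 * g - 1)) (ZMod p)) - 1 := by
    have hh : n0 + (j + 1) = i * p := by omega
    have h2 := congrArg (Nat.cast : ℕ → MvPolynomial (Fin (2 * g - 1)) (ZMod p)) hh
    push_cast at h2
    linear_combination h2 + (i : MvPolynomial (Fin (2 * g - 1)) (ZMod p)) * hpR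
  have H2m : ((m : ℕ) : MvPolynomial (Fin (2 * g - 1)) (ZMod p)) * 2 = -1 := by
    have hh : 2 * m + 1 = p := by omega
    have h2 := congrArg (Nat.cast : ℕ → MvPolynomial (Fin (2 * g - 1)) (ZMod p)) hh
    push_cast at h2
    linear_combination h2 + hpR
  -- finish
  simp only [hcF, hn0, hn0']
  rw [key]
  simp only [map_sub, map_add, map_one, map_natCast]
  push_cast
  linear_combination (F.coeff (n0 + 1) - F.coeff n0) * Hn0
    + (g : MvPolynomial (Fin (2 * g - 1)) (ZMod p)) * (F.coeff n0 - F.coeff (n0 + 1)) * H2m
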